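/- Fix n ≥ 1, let σ be the uniform (normalized surface) probability measure on 𝕊^n ⊂ ℝ^{n+1}, and let μ₀ be a Borel probability measure on 𝕊^n absolutely continuous with respect to σ. Let φ : [0,π] → ℝ be measurable with ∫∫ φ(d(x,y))² d(x,y)² dμ₀(y) dμ₀(x) < ∞. Then ∫∫∫ φ(d(x,y)) φ(d(x,z)) ⟨w(x,y), w(x,z)⟩ dμ₀(x) dμ₀(y) dμ₀(z) ≥ 0. -/

import Mathlib

open MeasureTheory Finset
open scoped ENNReal RealInnerProductSpace

/-- Geodesic distance on the unit sphere: `d(x,y) = arccos⟨x,y⟩`. -/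
noncomputable def sphereDist {n : ℕ} (x y : EuclideanSpace ℝ (Fin (n + 1))) : ℝ :=
  Real.arccos ⟪x, y⟫

open Classical in
/-- The influence vector on the unit sphere:
`w(x,y) = d(x,y)·(y − ⟨x,y⟩x)/‖y − ⟨x,y⟩x‖` if `y ≠ ±x`, and `0` otherwise. -/
noncomputable def sphereW {n : ℕ} (x y : EuclideanSpace ℝ (Fin (n + 1))) :
    EuclideanSpace ℝ (Fin (n + 1)) :=
  if y = x ∨ y = -x then 0
  else sphereDist x y • (‖y - ⟪x, y⟫ • x‖⁻¹ • (y - ⟪x, y⟫ • x))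

section Aux

variable {n : ℕ}

local notation "E" => EuclideanSpace ℝ (Fin (n + 1))

lemma measurable_sphereDist : Measurable (fun p : E × E => sphereDist p.1 p.2) := by
  have : Continuous (fun p : E × E => Real.arccos ⟪p.1, p.2⟫) :=
    Real.continuous_arccos.comp continuous_inner
  exact this.measurable

lemma measurable_sphereW : Measurable (fun p : E × E => sphereW p.1 p.2) := by
  classical
  have hset : MeasurableSet {p : E × E | p.2 = p.1 ∨ p.2 = -p.1} := by
    apply MeasurableSet.union
    · exact isClosed_eq continuous_snd continuous_fst |>.measurableSet
    · exact isClosed_eq continuous_snd continuous_fst.neg |>.measurableSet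
  have hbranch : Measurable (fun p : E × E =>
      sphereDist p.1 p.2 • (‖p.2 - ⟪p.1, p.2⟫ • p.1‖⁻¹ • (p.2 - ⟪p.1, p.2⟫ • p.1))) := by
    have hv : Measurable (fun p : E × E => p.2 - ⟪p.1, p.2⟫ • p.1) := by
      exact (measurable_snd.sub
        ((measurable_fst.inner (𝕜 := ℝ) measurable_snd).smul measurable_fst))
    exact measurable_sphereDist.smul ((hv.norm.inv).smul hv)
  have heq : (fun p : E × E => sphereW p.1 p.2) =
      fun p : E × E => if p.2 = p.1 ∨ p.2 = -p.1 then 0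
        else sphereDist p.1 p.2 • (‖p.2 - ⟪p.1, p.2⟫ • p.1‖⁻¹ • (p.2 - ⟪p.1, p.2⟫ • p.1)) := by
    funext p
    by_cases h : p.2 = p.1 ∨ p.2 = -p.1 <;> simp [sphereW, h]
  rw [heq]
  exact Measurable.ite hset measurable_const hbranch

lemma sphereDist_nonneg (x y : E) : 0 ≤ sphereDist x y := Real.arccos_nonneg _

lemma norm_sphereW_le (x y : E) : ‖sphereW x y‖ ≤ sphereDist x y := by
  unfold sphereW
  split_ifs with h
  · simpa using sphereDist_nonneg x y
  · set v : E := y - ⟪x, y⟫ • x with hv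
    rw [norm_smul, norm_smul, norm_inv, norm_norm, Real.norm_eq_abs,
      abs_of_nonneg (sphereDist_nonneg x y)]
    rcases eq_or_ne v 0 with h0 | h0
    · simp [h0, sphereDist_nonneg x y]
    · rw [inv_mul_cancel₀ (norm_ne_zero_iff.mpr h0), mul_one]

end Aux

/-- nonnegativity of the cross term on the sphere for `μ₀` absolutely
continuous with respect to the uniform measure `σ`:
`∫∫∫ φ(d(x,y))φ(d(x,z))⟨w(x,y),w(x,z)⟩ dμ₀(x)dμ₀(y)dμ₀(z)`. -/
theorem sphere_crossTerm_nonneg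
    (n : ℕ) (hn : 1 ≤ n)
    (σ : Measure (EuclideanSpace ℝ (Fin (n + 1)))) [IsProbabilityMeasure σ]
    (hσsphere : σ (Metric.sphere (0 : EuclideanSpace ℝ (Fin (n + 1))) 1)ᶜ = 0)
    (hσinv : ∀ O : EuclideanSpace ℝ (Fin (n + 1)) ≃ₗᵢ[ℝ] EuclideanSpace ℝ (Fin (n + 1)),
      Measure.map O σ = σ)
    (μ₀ : Measure (EuclideanSpace ℝ (Fin (n + 1)))) [IsProbabilityMeasure μ₀]
    (hμ₀ : μ₀ ≪ σ)
    (φ : ℝ → ℝ) (hφ : Measurable φ)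
    (hint : Integrable (fun p : EuclideanSpace ℝ (Fin (n + 1)) ×
        EuclideanSpace ℝ (Fin (n + 1)) =>
      (φ (sphereDist p.1 p.2)) ^ 2 * (sphereDist p.1 p.2) ^ 2) (μ₀.prod μ₀)) :
    0 ≤ ∫ p : EuclideanSpace ℝ (Fin (n + 1)) ×
        (EuclideanSpace ℝ (Fin (n + 1)) × EuclideanSpace ℝ (Fin (n + 1))),
      φ (sphereDist p.1 p.2.1) * φ (sphereDist p.1 p.2.2) *
        ⟪sphereW p.1 p.2.1, sphereW p.1 p.2.2⟫ ∂(μ₀.prod (μ₀.prod μ₀)) := by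
  set E := EuclideanSpace ℝ (Fin (n + 1))
  set F : E × E → E := fun p => φ (sphereDist p.1 p.2) • sphereW p.1 p.2 with hF
  -- measurability of F
  have hFmeas : Measurable F :=
    ((hφ.comp measurable_sphereDist)).smul measurable_sphereW
  -- pointwise norm bound
  have hFnorm : ∀ p : E × E, ‖F p‖ ≤ |φ (sphereDist p.1 p.2)| * sphereDist p.1 p.2 := by
    intro p
    rw [hF]
    simp only [norm_smul, Real.norm_eq_abs]
    exact mul_le_mul_of_nonneg_left (norm_sphereW_le _ _) (abs_nonneg _)
  have hFnormsq : ∀ p : E × E, ‖F p‖ ^ 2 ≤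
      φ (sphereDist p.1 p.2) ^ 2 * sphereDist p.1 p.2 ^ 2 := by
    intro p
    calc ‖F p‖ ^ 2 ≤ (|φ (sphereDist p.1 p.2)| * sphereDist p.1 p.2) ^ 2 := by
          apply pow_le_pow_left₀ (norm_nonneg _) (hFnorm p)
      _ = φ (sphereDist p.1 p.2) ^ 2 * sphereDist p.1 p.2 ^ 2 := by
          rw [mul_pow, sq_abs]
  -- integrability of ‖F‖² on μ₀ × μ₀
  have h1 : Integrable (fun p : E × E => ‖F p‖ ^ 2) (μ₀.prod μ₀) := by
    refine hint.mono' (hFmeas.norm.pow_const 2).aestronglyMeasurable ?_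
    filter_upwards with p
    rw [Real.norm_eq_abs, abs_of_nonneg (by positivity)]
    exact hFnormsq p
  -- the integrand equals an inner product of F's
  have hEq : (fun p : E × (E × E) =>
      φ (sphereDist p.1 p.2.1) * φ (sphereDist p.1 p.2.2) *
        ⟪sphereW p.1 p.2.1, sphereW p.1 p.2.2⟫) =
      fun p : E × (E × E) => ⟪F (p.1, p.2.1), F (p.1, p.2.2)⟫ := by
    funext p
    rw [hF]
    simp only [real_inner_smul_left, real_inner_smul_right]
    ring
  rw [hEq]
  -- measure preserving projections
  have mp1 : MeasurePreserving (fun p : E × (E × E) => (p.1, p.2.1))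
      (μ₀.prod (μ₀.prod μ₀)) (μ₀.prod μ₀) := by
    have : MeasurePreserving (Prod.map (id : E → E) (Prod.fst : E × E → E))
        (μ₀.prod (μ₀.prod μ₀)) (μ₀.prod μ₀) := by
      refine (MeasurePreserving.id μ₀).prod ⟨measurable_fst, ?_⟩
      simp [Measure.map_fst_prod]
    exact this
  have mp2 : MeasurePreserving (fun p : E × (E × E) => (p.1, p.2.2))
      (μ₀.prod (μ₀.prod μ₀)) (μ₀.prod μ₀) := by
    have : MeasurePreserving (Prod.map (id : E → E) (Prod.snd : E × E → E))
        (μ₀.prod (μ₀.prod μ₀)) (μ₀.prod μ₀) := by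
      refine (MeasurePreserving.id μ₀).prod ⟨measurable_snd, ?_⟩
      simp [Measure.map_snd_prod]
    exact this
  have h2 : Integrable (fun p : E × (E × E) => ‖F (p.1, p.2.1)‖ ^ 2)
      (μ₀.prod (μ₀.prod μ₀)) := by
    rw [← memLp_one_iff_integrable] at h1 ⊢
    exact h1.comp_measurePreserving mp1
  have h3 : Integrable (fun p : E × (E × E) => ‖F (p.1, p.2.2)‖ ^ 2)
      (μ₀.prod (μ₀.prod μ₀)) := by
    have h1' := h1
    rw [← memLp_one_iff_integrable] at h1' ⊢
    exact h1'.comp_measurePreserving mp2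
  -- integrability of the full integrand
  have hFull : Integrable (fun p : E × (E × E) => ⟪F (p.1, p.2.1), F (p.1, p.2.2)⟫)
      (μ₀.prod (μ₀.prod μ₀)) := by
    have hmeas : Measurable (fun p : E × (E × E) => ⟪F (p.1, p.2.1), F (p.1, p.2.2)⟫) := by
      apply Measurable.inner
      · exact hFmeas.comp (measurable_fst.prodMk (measurable_fst.comp measurable_snd))
      · exact hFmeas.comp (measurable_fst.prodMk (measurable_snd.comp measurable_snd))
    refine ((h2.add h3).const_mul (2⁻¹ : ℝ)).mono' hmeas.aestronglyMeasurable ?_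
    filter_upwards with p
    simp only [Pi.add_apply]
    rw [Real.norm_eq_abs]
    have hCS := abs_real_inner_le_norm (F (p.1, p.2.1)) (F (p.1, p.2.2))
    have hAM : ‖F (p.1, p.2.1)‖ * ‖F (p.1, p.2.2)‖ ≤
        2⁻¹ * (‖F (p.1, p.2.1)‖ ^ 2 + ‖F (p.1, p.2.2)‖ ^ 2) := by
      nlinarith [sq_nonneg (‖F (p.1, p.2.1)‖ - ‖F (p.1, p.2.2)‖)]
    linarith
  rw [MeasureTheory.integral_prod _ hFull]
  -- reduce to a.e. nonnegativity of the inner double integral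
  apply integral_nonneg_of_ae
  have hae : ∀ᵐ x ∂μ₀, Integrable (fun y => ‖F (x, y)‖ ^ 2) μ₀ := h1.prod_right_ae
  filter_upwards [hae] with x hx
  -- F (x, ·) is in L², hence L¹
  have hmx : AEStronglyMeasurable (fun y => F (x, y)) μ₀ :=
    (hFmeas.comp (measurable_const.prodMk measurable_id)).aestronglyMeasurable
  have hL2 : MemLp (fun y => F (x, y)) 2 μ₀ :=
    (memLp_two_iff_integrable_sq_norm hmx).2 hx
  have hL1 : Integrable (fun y => F (x, y)) μ₀ := by
    rw [← memLp_one_iff_integrable]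
    exact hL2.mono_exponent (by norm_num)
  -- integrability of the inner-product kernel on μ₀ × μ₀
  have hker : Integrable (fun q : E × E => ⟪F (x, q.1), F (x, q.2)⟫) (μ₀.prod μ₀) := by
    have hprod : Integrable (fun q : E × E => ‖F (x, q.1)‖ * ‖F (x, q.2)‖) (μ₀.prod μ₀) :=
      hL1.norm.mul_prod hL1.norm
    have hmeas : AEStronglyMeasurable (fun q : E × E => ⟪F (x, q.1), F (x, q.2)⟫)
        (μ₀.prod μ₀) := by
      apply Measurable.aestronglyMeasurable
      apply Measurable.inner
      · exact hFmeas.comp (measurable_const.prodMk measurable_fst)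
      · exact hFmeas.comp (measurable_const.prodMk measurable_snd)
    refine hprod.mono' hmeas ?_
    filter_upwards with q
    rw [Real.norm_eq_abs]
    exact abs_real_inner_le_norm _ _
  rw [MeasureTheory.integral_prod _ hker]
  have hinner : ∀ y : E, ∫ z, ⟪F (x, y), F (x, z)⟫ ∂μ₀ = ⟪F (x, y), ∫ z, F (x, z) ∂μ₀⟫ :=
    fun y => integral_inner hL1 (F (x, y))
  dsimp only
  rw [integral_congr_ae (ae_of_all _ hinner)]
  have : ∀ y : E, ⟪F (x, y), ∫ z, F (x, z) ∂μ₀⟫ = ⟪(∫ z, F (x, z) ∂μ₀), F (x, y)⟫ :=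
    fun y => real_inner_comm _ _
  simp_rw [this, integral_inner hL1]
  exact real_inner_self_nonneg
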